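/- Let 0 < q < q̂ < 1 and assume p_ND > 0, 0 < ζ < η(q), 0 < ζ < η(q̂), 0 < θ(q) < κ(q), and 0 < θ(q̂) < κ(q̂). Then both coordinates of the interior equilibrium strictly increase when q_ND increases from q to q̂: θ(q)/κ(q) < θ(q̂)/κ(q̂) and ζ/η(q) < ζ/η(q̂). -/
import Mathlib


/-- In the negative defensive medicine model, an increase of `q_ND` from `q` to `q̂` strictly
increases both coordinates `(θ(q)/κ(q), ζ/η(q))` of the interior equilibrium, where
`η(q) = (p_D q_D − p_ND q)E`, `θ(q) = q(C_L − p_ND E)`, `κ(q) = θ(q) + q_D(p_D E − C_L)`. -/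
theorem statement11 (E CL pD pND qD q qh ζ : ℝ)
    (hE : 0 < E) (hCL : 0 < CL)
    (hpND : 0 < pND) (hpNDpD : pND ≤ pD) (hpD : pD ≤ 1)
    (hqD : 0 < qD) (hqDq : qD < q) (hq : q < qh) (hqh : qh < 1)
    (hζ : 0 < ζ) (hζη : ζ < (pD * qD - pND * q) * E) (hζηh : ζ < (pD * qD - pND * qh) * E)
    (hθ : 0 < q * (CL - pND * E))
    (hθκ : q * (CL - pND * E) < q * (CL - pND * E) + qD * (pD * E - CL))
    (hθh : 0 < qh * (CL - pND * E))
    (hθκh : qh * (CL - pND * E) < qh * (CL - pND * E) + qD * (pD * E - CL)) :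
    q * (CL - pND * E) / (q * (CL - pND * E) + qD * (pD * E - CL)) <
      qh * (CL - pND * E) / (qh * (CL - pND * E) + qD * (pD * E - CL)) ∧
    ζ / ((pD * qD - pND * q) * E) < ζ / ((pD * qD - pND * qh) * E) := by
  have ha : 0 < CL - pND * E := by nlinarith
  have hb : 0 < qD * (pD * E - CL) := by linarith
  constructor
  · rw [div_lt_div_iff₀ (by linarith) (by linarith)]
    nlinarith [mul_pos (mul_pos (sub_pos.mpr hq) ha) hb]
  · have h1 : 0 < (pD * qD - pND * qh) * E := lt_trans hζ hζηh
    have h2 : (pD * qD - pND * qh) * E < (pD * qD - pND * q) * E := by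
      nlinarith [mul_pos (mul_pos hpND (sub_pos.mpr hq)) hE]
    exact div_lt_div_of_pos_left hζ h1 h2
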